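/- Let ϱ : [0,π] → ℝ be continuous with ϱ(ξ) > 0 for all ξ ∈ [0,π], and set ϱ₀ := min_{ξ∈[0,π]} ϱ(ξ) and ϱ₁ := (2/π)∫₀^π ϱ(ξ) dξ. Let n ≥ 1 be an integer, μ ∈ ℝ, and let φ : [0,π] → ℝ be twice continuously differentiable, not identically zero, satisfying φ''(ξ) + (μ − ϱ(ξ))φ(ξ) = 0 on [0,π] with Neumann boundary conditions φ'(0) = φ'(π) = 0, and suppose φ has exactly n zeros in the open interval (0,π), i.e. the set {ξ ∈ (0,π) : φ(ξ) = 0} has exactly n elements. Then n² + ϱ₀ ≤ μ ≤ n² + ϱ₁. -/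

import Mathlib

open Set Real Filter intervalIntegral MeasureTheory Topology

namespace Stmt2Aux

/-- Nondegeneracy: a nontrivial solution of `φ'' + (μ-ϱ)φ = 0` has no double zero in `[0,π]`. -/
lemma nondeg {ϱ φ : ℝ → ℝ} {μ : ℝ} (hϱ : ContinuousOn ϱ (Icc 0 π)) (hφ : ContDiff ℝ 2 φ)
    (hne : ∃ ξ ∈ Icc 0 π, φ ξ ≠ 0)
    (hode : ∀ ξ ∈ Icc 0 π, deriv (deriv φ) ξ + (μ - ϱ ξ) * φ ξ = 0) :
    ∀ ξ ∈ Icc 0 π, φ ξ ≠ 0 ∨ deriv φ ξ ≠ 0 := by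
  have hment : ContDiff ℝ ((1 : WithTop ℕ∞) + 1) φ := by
    convert hφ using 2; norm_num
  have hd := contDiff_succ_iff_deriv.mp hment
  have hφd : Differentiable ℝ φ := hd.1
  have hφ'cd : ContDiff ℝ 1 (deriv φ) := hd.2.2
  have hφ'd : Differentiable ℝ (deriv φ) := hφ'cd.differentiable one_ne_zero
  by_contra hcon
  push_neg at hcon
  obtain ⟨ξ₀, hξ₀, h1, h2⟩ := hcon
  set f : ℝ → ℝ := fun x => (φ x) ^ 2 + (deriv φ x) ^ 2 with hfdef
  set f' : ℝ → ℝ := fun x => 2 * φ x * deriv φ x + 2 * deriv φ x * deriv (deriv φ) x with hf'def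
  have hfnn : ∀ x, 0 ≤ f x := fun x => by positivity
  have hf' : ∀ x, HasDerivAt f (f' x) x := by
    intro x
    have k1 := ((hφd x).hasDerivAt.pow 2)
    have k2 := ((hφ'd x).hasDerivAt.pow 2)
    refine (k1.add k2).congr_deriv ?_
    simp [hf'def]
  have hfc : Continuous f := by
    have := hφd.continuous
    have := hφ'd.continuous
    fun_prop
  obtain ⟨C, hC⟩ := isCompact_Icc.exists_bound_of_continuousOn hϱ
  have hC0 : 0 ≤ C := le_trans (norm_nonneg _) (hC 0 ⟨le_rfl, pi_pos.le⟩)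
  set K : ℝ := 1 + C + |μ| with hKdef
  have hbound : ∀ x ∈ Icc (0:ℝ) π, |f' x| ≤ K * |f x| := by
    intro x hx
    have hode' : deriv (deriv φ) x = (ϱ x - μ) * φ x := by have := hode x hx; linarith
    have hC' : |ϱ x| ≤ C := by simpa using hC x hx
    have e1 : f' x = (2 * φ x * deriv φ x) * (1 + (ϱ x - μ)) := by
      simp only [hf'def, hode']; ring
    have e2 : |2 * φ x * deriv φ x| ≤ f x := by
      show |2 * φ x * deriv φ x| ≤ φ x ^ 2 + deriv φ x ^ 2
      refine abs_le.mpr ⟨?_, ?_⟩ <;>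
        nlinarith [sq_nonneg (φ x - deriv φ x), sq_nonneg (φ x + deriv φ x)]
    have e3 : |1 + (ϱ x - μ)| ≤ K := by
      have l1 := abs_le.mp hC'
      have l2 := le_abs_self μ
      have l3 := neg_abs_le μ
      refine abs_le.mpr ⟨by simp only [hKdef]; linarith, by simp only [hKdef]; linarith⟩
    rw [e1, abs_mul, abs_of_nonneg (hfnn x)]
    calc |2 * φ x * deriv φ x| * |1 + (ϱ x - μ)| ≤ f x * K :=
          mul_le_mul e2 e3 (abs_nonneg _) (hfnn x)
      _ = K * f x := mul_comm _ _
  have hf0 : f ξ₀ = 0 := by simp [hfdef, h1, h2]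
  -- forward
  have hfwd : ∀ x ∈ Icc ξ₀ π, f x = 0 := by
    intro x hx
    have := norm_le_gronwallBound_of_norm_deriv_right_le (f := f) (f' := f')
      (a := ξ₀) (b := π) (δ := 0) (K := K) (ε := 0)
      hfc.continuousOn (fun y _ => (hf' y).hasDerivWithinAt)
      (by simp [hf0]) ?_ x hx
    · rw [gronwallBound_ε0_δ0] at this
      have := le_antisymm (by simpa [Real.norm_eq_abs, abs_of_nonneg (hfnn x)] using this) (hfnn x)
      linarith
    · intro y hy
      have hy' : y ∈ Icc (0:ℝ) π := ⟨le_trans hξ₀.1 hy.1, hy.2.le⟩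
      simpa [Real.norm_eq_abs] using hbound y hy'
  -- backward
  have hbwd : ∀ x ∈ Icc (0:ℝ) ξ₀, f x = 0 := by
    intro x hx
    set g : ℝ → ℝ := fun t => f (ξ₀ - t) with hgdef
    have hg' : ∀ t, HasDerivAt g (f' (ξ₀ - t) * (-1)) t := by
      intro t
      exact (hf' (ξ₀ - t)).comp t ((hasDerivAt_id t).const_sub ξ₀)
    have key : ∀ t ∈ Icc (0:ℝ) ξ₀, g t = 0 := by
      intro t ht
      have := norm_le_gronwallBound_of_norm_deriv_right_le (f := g)
        (f' := fun t => f' (ξ₀ - t) * (-1))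
        (a := 0) (b := ξ₀) (δ := 0) (K := K) (ε := 0)
        (hfc.comp (by fun_prop)).continuousOn (fun y _ => (hg' y).hasDerivWithinAt)
        (by simp [hgdef, hf0]) ?_ t ht
      · rw [gronwallBound_ε0_δ0] at this
        have h9 := hfnn (ξ₀ - t)
        have : |g t| ≤ 0 := by simpa [Real.norm_eq_abs] using this
        have : g t = 0 := le_antisymm (by simpa [hgdef, abs_of_nonneg h9] using this) (by simpa [hgdef] using h9)
        exact this
      · intro y hy
        have hy' : ξ₀ - y ∈ Icc (0:ℝ) π := ⟨by linarith [hy.2], by linarith [hy.1, hξ₀.2]⟩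
        simp only [Real.norm_eq_abs, hgdef, abs_mul, abs_neg, abs_one, mul_one, add_zero]
        exact hbound _ hy'
    have := key (ξ₀ - x) ⟨by linarith [hx.2], by linarith [hx.1]⟩
    simpa [hgdef, sub_sub_cancel] using this
  obtain ⟨ξ, hξ, hφξ⟩ := hne
  have : f ξ = 0 := by
    rcases le_total ξ ξ₀ with h | h
    · exact hbwd ξ ⟨hξ.1, h⟩
    · exact hfwd ξ ⟨h, hξ.2⟩
  have hf2 : φ ξ ^ 2 + deriv φ ξ ^ 2 = 0 := this
  have h3 : φ ξ ^ 2 = 0 := by nlinarith [sq_nonneg (deriv φ ξ), sq_nonneg (φ ξ)]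
  exact hφξ (pow_eq_zero_iff two_ne_zero |>.mp h3)


lemma interval_winding {ϱ φ : ℝ → ℝ} {μ ν : ℝ} (hν : 0 < ν)
    (hφd : Differentiable ℝ φ) (hφ'd : Differentiable ℝ (deriv φ))
    (hϱ : ContinuousOn ϱ (Icc 0 π))
    (hode : ∀ ξ ∈ Icc 0 π, deriv (deriv φ) ξ + (μ - ϱ ξ) * φ ξ = 0)
    (hnd : ∀ ξ ∈ Icc 0 π, φ ξ ≠ 0 ∨ deriv φ ξ ≠ 0)
    {a b : ℝ} (ha : 0 ≤ a) (hb : b ≤ π) (hab : a < b)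
    (hmid : ∀ x ∈ Ioo a b, φ x ≠ 0)
    (hA : φ a = 0 ∨ deriv φ a = 0) (hB : φ b = 0 ∨ deriv φ b = 0) :
    (∫ x in a..b, ν * ((deriv φ x) ^ 2 + (μ - ϱ x) * (φ x) ^ 2) /
        ((deriv φ x) ^ 2 + ν ^ 2 * (φ x) ^ 2))
      = (if φ b = 0 then π else π / 2) - (if φ a = 0 then 0 else π / 2) := by
  set G : ℝ → ℝ := fun x => ν * ((deriv φ x) ^ 2 + (μ - ϱ x) * (φ x) ^ 2) /
      ((deriv φ x) ^ 2 + ν ^ 2 * (φ x) ^ 2) with hGdef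
  have hIcc : Icc a b ⊆ Icc 0 π := Icc_subset_Icc ha hb
  have hcφ : Continuous φ := hφd.continuous
  have hc1 : Continuous (deriv φ) := hφ'd.continuous
  have hden : ∀ x ∈ Icc (0:ℝ) π, 0 < (deriv φ x) ^ 2 + ν ^ 2 * (φ x) ^ 2 := by
    intro x hx
    rcases hnd x hx with h | h
    · have h1 : ν * φ x ≠ 0 := mul_ne_zero hν.ne' h
      have h2 : 0 < (ν * φ x) ^ 2 :=
        lt_of_le_of_ne (sq_nonneg _) (Ne.symm (pow_ne_zero 2 h1))
      nlinarith [sq_nonneg (deriv φ x)]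
    · have h2 : 0 < (deriv φ x) ^ 2 :=
        lt_of_le_of_ne (sq_nonneg _) (Ne.symm (pow_ne_zero 2 h))
      nlinarith [sq_nonneg (ν * φ x)]
  have hGc : ContinuousOn G (Icc 0 π) := by
    apply ContinuousOn.div
    · exact continuousOn_const.mul (((hc1.pow 2).continuousOn).add
        ((continuousOn_const.sub hϱ).mul ((hcφ.pow 2).continuousOn)))
    · exact ((hc1.pow 2).continuousOn).add
        (continuousOn_const.mul ((hcφ.pow 2).continuousOn))
    · exact fun x hx => (hden x hx).ne'
  have hIG : ∀ x ∈ Icc a b, ∀ y ∈ Icc a b, IntervalIntegrable G volume x y := by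
    intro x hx y hy
    exact (hGc.mono ((uIcc_subset_Icc hx hy).trans hIcc)).intervalIntegrable
  set θ : ℝ → ℝ := fun x => π / 2 - arctan (deriv φ x / (ν * φ x)) with hθdef
  -- derivative of θ
  have hθd : ∀ x ∈ Ioo a b, HasDerivAt θ (G x) x := by
    intro x hx
    have hx' : x ∈ Icc (0:ℝ) π := hIcc (Ioo_subset_Icc_self hx)
    have hφx : φ x ≠ 0 := hmid x hx
    have hdenx : ν * φ x ≠ 0 := mul_ne_zero hν.ne' hφx
    have hode' : deriv (deriv φ) x = (ϱ x - μ) * φ x := by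
      have := hode x hx'; linarith
    have hw : HasDerivAt (fun y => deriv φ y / (ν * φ y))
        ((deriv (deriv φ) x * (ν * φ x) - deriv φ x * (ν * deriv φ x)) / (ν * φ x) ^ 2) x :=
      ((hφ'd x).hasDerivAt).div ((hφd x).hasDerivAt.const_mul ν) hdenx
    have harc := (Real.hasDerivAt_arctan (deriv φ x / (ν * φ x))).comp x hw
    have := harc.const_sub (π / 2)
    refine this.congr_deriv ?_
    rw [hode']
    have h2 : 0 < (deriv φ x) ^ 2 + ν ^ 2 * (φ x) ^ 2 := hden x hx'
    simp only [hGdef]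
    field_simp
    ring
  -- primitive
  set F : ℝ → ℝ := fun x => ∫ t in a..x, G t with hFdef
  have hFc : ContinuousOn F (Icc a b) := by
    have : IntegrableOn G (uIcc a b) volume := by
      rw [uIcc_of_le hab.le]
      exact ((hGc.mono hIcc)).integrableOn_Icc
    simpa [hFdef, uIcc_of_le hab.le] using continuousOn_primitive_interval this
  have hsub : ∀ x ∈ Ioo a b, ∀ y ∈ Ioo a b, x ≤ y → F y - F x = θ y - θ x := by
    intro x hx y hy hxy
    have hxI : x ∈ Icc a b := Ioo_subset_Icc_self hx
    have hyI : y ∈ Icc a b := Ioo_subset_Icc_self hy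
    have hadd := integral_add_adjacent_intervals (hIG a ⟨le_rfl, hab.le⟩ x hxI)
      (hIG x hxI y hyI)
    have hftc : ∫ t in x..y, G t = θ y - θ x := by
      apply integral_eq_sub_of_hasDerivAt
      · intro t ht
        rw [uIcc_of_le hxy] at ht
        exact hθd t ⟨lt_of_lt_of_le hx.1 ht.1, lt_of_le_of_lt ht.2 hy.2⟩
      · exact hIG x hxI y hyI
    simp only [hFdef]
    rw [← hadd, hftc]; ring
  set m : ℝ := (a + b) / 2 with hmdef
  have hm : m ∈ Ioo a b := ⟨by simp only [hmdef]; linarith, by simp only [hmdef]; linarith⟩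
  have hconst : ∀ x ∈ Ioo a b, F x - θ x = F m - θ m := by
    intro x hx
    rcases le_total x m with h | h
    · have := hsub x hx m hm h; linarith
    · have := hsub m hm x hx h; linarith
  -- limits of F
  have hFa : Tendsto F (𝓝[>] a) (𝓝 0) := by
    have h0 : F a = 0 := by simp [hFdef]
    have := (hFc a ⟨le_rfl, hab.le⟩).tendsto
    rw [h0] at this
    exact this.mono_left
      (by rw [← nhdsWithin_Ioo_eq_nhdsGT hab]
          exact nhdsWithin_mono a Ioo_subset_Icc_self)
  have hFb : Tendsto F (𝓝[<] b) (𝓝 (F b)) := by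
    have := (hFc b ⟨hab.le, le_rfl⟩).tendsto
    exact this.mono_left
      (by rw [← nhdsWithin_Ioo_eq_nhdsLT hab]
          exact nhdsWithin_mono b Ioo_subset_Icc_self)
  -- limit of θ at a (from the right)
  have hθa : Tendsto θ (𝓝[>] a) (𝓝 (if φ a = 0 then 0 else π / 2)) := by
    by_cases hφa : φ a = 0
    · rw [if_pos hφa]
      have hda : deriv φ a ≠ 0 := by
        rcases hnd a ⟨ha, le_trans hab.le hb⟩ with h | h
        · exact absurd hφa h
        · exact h
      have hslope : Tendsto (fun x => φ x / (x - a)) (𝓝[>] a) (𝓝 (deriv φ a)) := by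
        have h1 := hasDerivAt_iff_tendsto_slope.mp (hφd a).hasDerivAt
        have h2 : Tendsto (slope φ a) (𝓝[>] a) (𝓝 (deriv φ a)) :=
          h1.mono_left (nhdsWithin_mono a (fun x hx => ne_of_gt hx))
        refine h2.congr (fun x => ?_)
        rw [slope_def_field, hφa, sub_zero]
      have h1 : Tendsto (fun x => deriv φ x / (ν * (φ x / (x - a)))) (𝓝[>] a)
          (𝓝 (deriv φ a / (ν * deriv φ a))) := by
        exact (hc1.continuousAt.tendsto.mono_left nhdsWithin_le_nhds).div
          (tendsto_const_nhds.mul hslope) (mul_ne_zero hν.ne' hda)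
      have hlim : deriv φ a / (ν * deriv φ a) = 1 / ν := by
        rw [mul_comm, ← div_div, div_self hda]
      rw [hlim] at h1
      have h2 : Tendsto (fun x => (x - a)⁻¹) (𝓝[>] a) atTop := by
        apply tendsto_inv_nhdsGT_zero.comp
        rw [tendsto_nhdsWithin_iff]
        constructor
        · have : Tendsto (fun x => x - a) (𝓝 a) (𝓝 (a - a)) :=
            (continuous_id.sub continuous_const).tendsto a
          rw [sub_self] at this
          exact this.mono_left nhdsWithin_le_nhds
        · filter_upwards [self_mem_nhdsWithin] with x hx
          exact sub_pos.mpr (mem_Ioi.mp hx)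
      have hwt : Tendsto (fun x => deriv φ x / (ν * φ x)) (𝓝[>] a) atTop := by
        refine (h1.pos_mul_atTop (by positivity) h2).congr' ?_
        filter_upwards [Ioo_mem_nhdsGT hab] with x hx
        have hxa : x - a ≠ 0 := sub_ne_zero.mpr (ne_of_gt hx.1)
        have hφx : φ x ≠ 0 := hmid x hx
        field_simp
      have harcto : Tendsto (fun x => arctan (deriv φ x / (ν * φ x))) (𝓝[>] a) (𝓝 (π / 2)) :=
        (Real.tendsto_arctan_atTop.mono_right nhdsWithin_le_nhds).comp hwt
      have := harcto.const_sub (π / 2)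
      simpa [hθdef] using this
    · rw [if_neg hφa]
      have hda : deriv φ a = 0 := hA.resolve_left (by exact fun h => hφa h)
      have hwc : ContinuousAt (fun x => deriv φ x / (ν * φ x)) a :=
        hc1.continuousAt.div (continuous_const.mul hcφ).continuousAt
          (mul_ne_zero hν.ne' hφa)
      have hθc : ContinuousAt θ a := by
        apply ContinuousAt.sub continuousAt_const
        exact Real.continuous_arctan.continuousAt.comp hwc
      have hθav : θ a = π / 2 := by
        simp [hθdef, hda]
      have := hθc.tendsto
      rw [hθav] at this
      exact this.mono_left nhdsWithin_le_nhds
  -- limit of θ at b (from the left)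
  have hθb : Tendsto θ (𝓝[<] b) (𝓝 (if φ b = 0 then π else π / 2)) := by
    by_cases hφb : φ b = 0
    · rw [if_pos hφb]
      have hdb : deriv φ b ≠ 0 := by
        rcases hnd b ⟨le_trans ha hab.le, hb⟩ with h | h
        · exact absurd hφb h
        · exact h
      have hslope : Tendsto (fun x => φ x / (x - b)) (𝓝[<] b) (𝓝 (deriv φ b)) := by
        have h1 := hasDerivAt_iff_tendsto_slope.mp (hφd b).hasDerivAt
        have h2 : Tendsto (slope φ b) (𝓝[<] b) (𝓝 (deriv φ b)) :=
          h1.mono_left (nhdsWithin_mono b (fun x hx => ne_of_lt hx))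
        refine h2.congr (fun x => ?_)
        rw [slope_def_field, hφb, sub_zero]
      have h1 : Tendsto (fun x => deriv φ x / (ν * (φ x / (x - b)))) (𝓝[<] b)
          (𝓝 (deriv φ b / (ν * deriv φ b))) := by
        exact (hc1.continuousAt.tendsto.mono_left nhdsWithin_le_nhds).div
          (tendsto_const_nhds.mul hslope) (mul_ne_zero hν.ne' hdb)
      have hlim : deriv φ b / (ν * deriv φ b) = 1 / ν := by
        rw [mul_comm, ← div_div, div_self hdb]
      rw [hlim] at h1
      have h2 : Tendsto (fun x => (x - b)⁻¹) (𝓝[<] b) atBot := by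
        have h3 : Tendsto (fun x => (b - x)⁻¹) (𝓝[<] b) atTop := by
          apply tendsto_inv_nhdsGT_zero.comp
          rw [tendsto_nhdsWithin_iff]
          constructor
          · have : Tendsto (fun x => b - x) (𝓝 b) (𝓝 (b - b)) :=
              (continuous_const.sub continuous_id).tendsto b
            rw [sub_self] at this
            exact this.mono_left nhdsWithin_le_nhds
          · filter_upwards [self_mem_nhdsWithin] with x hx
            exact sub_pos.mpr (mem_Iio.mp hx)
        have h4 := tendsto_neg_atTop_atBot.comp h3
        refine h4.congr (fun x => ?_)
        simp only [Function.comp_apply]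
        rw [← inv_neg, neg_sub]
      have hwt : Tendsto (fun x => deriv φ x / (ν * φ x)) (𝓝[<] b) atBot := by
        refine (h1.pos_mul_atBot (by positivity) h2).congr' ?_
        filter_upwards [Ioo_mem_nhdsLT hab] with x hx
        have hxb : x - b ≠ 0 := sub_ne_zero.mpr (ne_of_lt hx.2)
        have hφx : φ x ≠ 0 := hmid x hx
        field_simp
      have harcto : Tendsto (fun x => arctan (deriv φ x / (ν * φ x))) (𝓝[<] b)
          (𝓝 (-(π / 2))) :=
        (Real.tendsto_arctan_atBot.mono_right nhdsWithin_le_nhds).comp hwt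
      have := harcto.const_sub (π / 2)
      have hval : π / 2 - -(π / 2) = π := by ring
      rw [hval] at this
      exact this
    · rw [if_neg hφb]
      have hdb : deriv φ b = 0 := hB.resolve_left (by exact fun h => hφb h)
      have hwc : ContinuousAt (fun x => deriv φ x / (ν * φ x)) b :=
        hc1.continuousAt.div (continuous_const.mul hcφ).continuousAt
          (mul_ne_zero hν.ne' hφb)
      have hθc : ContinuousAt θ b := by
        apply ContinuousAt.sub continuousAt_const
        exact Real.continuous_arctan.continuousAt.comp hwc
      have hθbv : θ b = π / 2 := by
        simp [hθdef, hdb]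
      have := hθc.tendsto
      rw [hθbv] at this
      exact this.mono_left nhdsWithin_le_nhds
  -- put it together
  have hne1 : (𝓝[>] a).NeBot := nhdsGT_neBot a
  have hne2 : (𝓝[<] b).NeBot := nhdsLT_neBot b
  have hconsta : Tendsto (fun x => F x - θ x) (𝓝[>] a) (𝓝 (F m - θ m)) := by
    refine tendsto_const_nhds.congr' ?_
    filter_upwards [Ioo_mem_nhdsGT hab] with x hx
    exact (hconst x hx).symm
  have hconstb : Tendsto (fun x => F x - θ x) (𝓝[<] b) (𝓝 (F m - θ m)) := by
    refine tendsto_const_nhds.congr' ?_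
    filter_upwards [Ioo_mem_nhdsLT hab] with x hx
    exact (hconst x hx).symm
  have e1 : F m - θ m = 0 - (if φ a = 0 then 0 else π / 2) :=
    tendsto_nhds_unique hconsta (hFa.sub hθa)
  have e2 : F m - θ m = F b - (if φ b = 0 then π else π / 2) :=
    tendsto_nhds_unique hconstb (hFb.sub hθb)
  have : F b = (if φ b = 0 then π else π / 2) - (if φ a = 0 then 0 else π / 2) := by
    rw [e1] at e2; linarith
  simpa [hFdef] using this


lemma winding_rec {ϱ φ : ℝ → ℝ} {μ ν : ℝ} (hν : 0 < ν)
    (hφd : Differentiable ℝ φ) (hφ'd : Differentiable ℝ (deriv φ))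
    (hϱ : ContinuousOn ϱ (Icc 0 π))
    (hode : ∀ ξ ∈ Icc 0 π, deriv (deriv φ) ξ + (μ - ϱ ξ) * φ ξ = 0)
    (hnd : ∀ ξ ∈ Icc 0 π, φ ξ ≠ 0 ∨ deriv φ ξ ≠ 0)
    (hφπ : φ π ≠ 0) (hbcπ : deriv φ π = 0)
    (hGint : ∀ x ∈ Icc (0:ℝ) π, ∀ y ∈ Icc (0:ℝ) π, IntervalIntegrable
      (fun x => ν * ((deriv φ x) ^ 2 + (μ - ϱ x) * (φ x) ^ 2) /
        ((deriv φ x) ^ 2 + ν ^ 2 * (φ x) ^ 2)) volume x y)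
    (m : ℕ) :
    ∀ a, 0 ≤ a → a < π → (φ a = 0 ∨ deriv φ a = 0) →
      {ξ ∈ Ioo a π | φ ξ = 0}.encard = m →
      (∫ x in a..π, ν * ((deriv φ x) ^ 2 + (μ - ϱ x) * (φ x) ^ 2) /
        ((deriv φ x) ^ 2 + ν ^ 2 * (φ x) ^ 2))
        = m * π + π / 2 - (if φ a = 0 then 0 else π / 2) := by
  induction m with
  | zero =>
    intro a ha haπ hbc hcard
    have hmid : ∀ x ∈ Ioo a π, φ x ≠ 0 := by
      intro x hx hφx
      have hmem : x ∈ {ξ ∈ Ioo a π | φ ξ = 0} := ⟨hx, hφx⟩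
      have hemp : {ξ ∈ Ioo a π | φ ξ = 0} = ∅ := Set.encard_eq_zero.mp (by exact_mod_cast hcard)
      rw [hemp] at hmem
      exact hmem
    have := interval_winding hν hφd hφ'd hϱ hode hnd ha le_rfl haπ hmid hbc
      (Or.inr hbcπ)
    rw [this, if_neg hφπ]
    push_cast; ring
  | succ m ih =>
    intro a ha haπ hbc hcard
    set s : Set ℝ := {ξ ∈ Ioo a π | φ ξ = 0} with hsdef
    have hfin : s.Finite := Set.finite_of_encard_eq_coe hcard
    have hsne : s.Nonempty := Set.nonempty_of_encard_ne_zero (by rw [hcard]; simp)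
    have htne : hfin.toFinset.Nonempty := by rwa [Set.Finite.toFinset_nonempty]
    set b : ℝ := hfin.toFinset.min' htne with hbdef
    have hbmem : b ∈ s := by
      have := hfin.toFinset.min'_mem htne
      rwa [Set.Finite.mem_toFinset] at this
    have hbmin : ∀ x ∈ s, b ≤ x := fun x hx =>
      hfin.toFinset.min'_le x (hfin.mem_toFinset.mpr hx)
    have hbIoo : b ∈ Ioo a π := hbmem.1
    have hφb : φ b = 0 := hbmem.2
    have hmid1 : ∀ x ∈ Ioo a b, φ x ≠ 0 := by
      intro x hx hφx
      have hxs : x ∈ s := ⟨⟨hx.1, lt_trans hx.2 hbIoo.2⟩, hφx⟩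
      exact absurd (hbmin x hxs) (not_le.mpr hx.2)
    have h1 := interval_winding hν hφd hφ'd hϱ hode hnd ha hbIoo.2.le hbIoo.1
      hmid1 hbc (Or.inl hφb)
    rw [if_pos hφb] at h1
    have hset : {ξ ∈ Ioo b π | φ ξ = 0} = s \ {b} := by
      ext x
      constructor
      · rintro ⟨hx, hφx⟩
        exact ⟨⟨⟨lt_trans hbIoo.1 hx.1, hx.2⟩, hφx⟩, by exact ne_of_gt hx.1⟩
      · rintro ⟨⟨hx, hφx⟩, hne⟩
        have : b ≤ x := hbmin x ⟨hx, hφx⟩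
        have hbx : b < x := lt_of_le_of_ne this (by simpa [eq_comm] using hne)
        exact ⟨⟨hbx, hx.2⟩, hφx⟩
    have hcard' : {ξ ∈ Ioo b π | φ ξ = 0}.encard = m := by
      rw [hset]
      have h := Set.encard_diff_singleton_add_one hbmem
      rw [hcard] at h
      have h2 : ((m : ℕ∞) + 1) = (↑(m + 1) : ℕ∞) := by push_cast; ring
      rw [← h2] at h
      exact WithTop.add_right_cancel (z := 1) (by simp) h
    have h2 := ih b (le_trans ha hbIoo.1.le) hbIoo.2 (Or.inl hφb) hcard'
    rw [if_pos hφb] at h2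
    have hadd := integral_add_adjacent_intervals
      (hGint a ⟨ha, haπ.le⟩ b ⟨le_trans ha hbIoo.1.le, hbIoo.2.le⟩)
      (hGint b ⟨le_trans ha hbIoo.1.le, hbIoo.2.le⟩ π ⟨pi_pos.le, le_rfl⟩)
    rw [← hadd, h1, h2]
    push_cast; ring


end Stmt2Aux

/-- Two-sided eigenvalue bound (6.31) for the Neumann Sturm–Liouville problem:
if `φ'' + (μ − ϱ)φ = 0`, `φ'(0) = φ'(π) = 0`, and `φ` has exactly `n ≥ 1` zeros
in `(0,π)`, then `n² + ϱ₀ ≤ μ ≤ n² + ϱ₁`. -/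
theorem stmt_2
    (ϱ : ℝ → ℝ) (hϱ : ContinuousOn ϱ (Set.Icc 0 Real.pi))
    (hϱpos : ∀ ξ ∈ Set.Icc 0 Real.pi, 0 < ϱ ξ)
    (ϱ₀ ϱ₁ : ℝ) (hϱ₀ : IsLeast (ϱ '' Set.Icc 0 Real.pi) ϱ₀)
    (hϱ₁ : ϱ₁ = (2 / Real.pi) * ∫ ξ in (0:ℝ)..Real.pi, ϱ ξ)
    (n : ℕ) (hn : 1 ≤ n) (μ : ℝ) (φ : ℝ → ℝ) (hφ : ContDiff ℝ 2 φ)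
    (hne : ∃ ξ ∈ Set.Icc 0 Real.pi, φ ξ ≠ 0)
    (hode : ∀ ξ ∈ Set.Icc 0 Real.pi, deriv (deriv φ) ξ + (μ - ϱ ξ) * φ ξ = 0)
    (hbc0 : deriv φ 0 = 0) (hbcπ : deriv φ Real.pi = 0)
    (hzeros : {ξ ∈ Set.Ioo 0 Real.pi | φ ξ = 0}.encard = n) :
    (n : ℝ) ^ 2 + ϱ₀ ≤ μ ∧ μ ≤ (n : ℝ) ^ 2 + ϱ₁ := by
  have hπ : (0:ℝ) < π := pi_pos
  have hment : ContDiff ℝ ((1 : WithTop ℕ∞) + 1) φ := by convert hφ using 2; norm_num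
  have hd := contDiff_succ_iff_deriv.mp hment
  have hφd : Differentiable ℝ φ := hd.1
  have hφ'd : Differentiable ℝ (deriv φ) := (hd.2.2).differentiable one_ne_zero
  have hcφ : Continuous φ := hφd.continuous
  have hc1 : Continuous (deriv φ) := hφ'd.continuous
  have hnd := Stmt2Aux.nondeg hϱ hφ hne hode
  have hφ0 : φ 0 ≠ 0 := by
    rcases hnd 0 ⟨le_rfl, hπ.le⟩ with h | h
    · exact h
    · exact absurd hbc0 h
  have hφπ : φ π ≠ 0 := by
    rcases hnd π ⟨hπ.le, le_rfl⟩ with h | h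
    · exact h
    · exact absurd hbcπ h
  have hden : ∀ ν : ℝ, 0 < ν → ∀ x ∈ Icc (0:ℝ) π,
      0 < (deriv φ x) ^ 2 + ν ^ 2 * (φ x) ^ 2 := by
    intro ν hν x hx
    rcases hnd x hx with h | h
    · have h1 : ν * φ x ≠ 0 := mul_ne_zero hν.ne' h
      have h2 : 0 < (ν * φ x) ^ 2 :=
        lt_of_le_of_ne (sq_nonneg _) (Ne.symm (pow_ne_zero 2 h1))
      nlinarith [sq_nonneg (deriv φ x)]
    · have h2 : 0 < (deriv φ x) ^ 2 :=
        lt_of_le_of_ne (sq_nonneg _) (Ne.symm (pow_ne_zero 2 h))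
      nlinarith [sq_nonneg (ν * φ x)]
  have hGc : ∀ ν : ℝ, 0 < ν → ContinuousOn
      (fun x => ν * ((deriv φ x) ^ 2 + (μ - ϱ x) * (φ x) ^ 2) /
        ((deriv φ x) ^ 2 + ν ^ 2 * (φ x) ^ 2)) (Icc 0 π) := by
    intro ν hν
    apply ContinuousOn.div
    · exact continuousOn_const.mul (((hc1.pow 2).continuousOn).add
        ((continuousOn_const.sub hϱ).mul ((hcφ.pow 2).continuousOn)))
    · exact ((hc1.pow 2).continuousOn).add
        (continuousOn_const.mul ((hcφ.pow 2).continuousOn))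
    · exact fun x hx => (hden ν hν x hx).ne'
  have hGint : ∀ ν : ℝ, 0 < ν → ∀ x ∈ Icc (0:ℝ) π, ∀ y ∈ Icc (0:ℝ) π,
      IntervalIntegrable
      (fun x => ν * ((deriv φ x) ^ 2 + (μ - ϱ x) * (φ x) ^ 2) /
        ((deriv φ x) ^ 2 + ν ^ 2 * (φ x) ^ 2)) volume x y := by
    intro ν hν x hx y hy
    exact ((hGc ν hν).mono (uIcc_subset_Icc hx hy)).intervalIntegrable
  -- the winding identity
  have hid : ∀ ν : ℝ, 0 < ν →
      (∫ x in (0:ℝ)..π, ν * ((deriv φ x) ^ 2 + (μ - ϱ x) * (φ x) ^ 2) /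
        ((deriv φ x) ^ 2 + ν ^ 2 * (φ x) ^ 2)) = n * π := by
    intro ν hν
    have := Stmt2Aux.winding_rec hν hφd hφ'd hϱ hode hnd hφπ hbcπ
      (hGint ν hν) n 0 le_rfl hπ (Or.inr hbc0) hzeros
    rw [if_neg hφ0] at this
    rw [this]; ring
  -- facts about ϱ₀
  obtain ⟨ξs, hξs, hϱ₀eq⟩ := hϱ₀.1
  have hϱ₀pos : 0 < ϱ₀ := hϱ₀eq ▸ hϱpos ξs hξs
  have hϱ₀le : ∀ ξ ∈ Icc (0:ℝ) π, ϱ₀ ≤ ϱ ξ := fun ξ hξ => hϱ₀.2 ⟨ξ, hξ, rfl⟩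
  -- generic upper estimate on the integrand
  have hGle : ∀ ν : ℝ, 0 < ν → (∀ x ∈ Icc (0:ℝ) π, μ - ϱ x ≤ ν ^ 2) →
      (n:ℝ) * π ≤ ν * π := by
    intro ν hν hq
    rw [← hid ν hν]
    have hmono : (∫ x in (0:ℝ)..π, ν * ((deriv φ x) ^ 2 + (μ - ϱ x) * (φ x) ^ 2) /
        ((deriv φ x) ^ 2 + ν ^ 2 * (φ x) ^ 2)) ≤ ∫ _ in (0:ℝ)..π, ν := by
      apply integral_mono_on hπ.le (hGint ν hν 0 ⟨le_rfl, hπ.le⟩ π ⟨hπ.le, le_rfl⟩)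
        intervalIntegrable_const
      intro x hx
      rw [div_le_iff₀ (hden ν hν x hx)]
      nlinarith [mul_nonneg (mul_nonneg hν.le (sq_nonneg (φ x)))
        (sub_nonneg.mpr (hq x hx)), sq_nonneg (deriv φ x)]
    calc (∫ x in (0:ℝ)..π, _) ≤ ∫ _ in (0:ℝ)..π, ν := hmono
      _ = ν * π := by rw [intervalIntegral.integral_const, smul_eq_mul]; ring
  -- μ - ϱ₀ > 0
  have hμϱ₀ : 0 < μ - ϱ₀ := by
    by_contra h
    push_neg at h
    have := hGle (1/2) (by norm_num) (fun x hx => by nlinarith [hϱ₀le x hx])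
    have hn1 : (1:ℝ) ≤ n := by exact_mod_cast hn
    nlinarith
  -- lower bound
  have hlow : (n : ℝ) ^ 2 + ϱ₀ ≤ μ := by
    set ν₁ : ℝ := Real.sqrt (μ - ϱ₀) with hν₁def
    have hν₁ : 0 < ν₁ := Real.sqrt_pos.mpr hμϱ₀
    have hν₁sq : ν₁ ^ 2 = μ - ϱ₀ := Real.sq_sqrt hμϱ₀.le
    have := hGle ν₁ hν₁ (fun x hx => by
      have := hϱ₀le x hx; rw [hν₁sq]; linarith)
    have hnν : (n:ℝ) ≤ ν₁ := le_of_mul_le_mul_right (by linarith) hπ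
    have : (n:ℝ) ^ 2 ≤ ν₁ ^ 2 := by
      apply pow_le_pow_left₀ (by positivity) hnν
    linarith [hν₁sq ▸ this]
  refine ⟨hlow, ?_⟩
  -- upper bound
  have hn1 : (1:ℝ) ≤ (n:ℝ) := by exact_mod_cast hn
  have hμpos : 0 < μ := by nlinarith
  set ν₂ : ℝ := Real.sqrt μ with hν₂def
  have hν₂ : 0 < ν₂ := Real.sqrt_pos.mpr hμpos
  have hν₂sq : ν₂ ^ 2 = μ := Real.sq_sqrt hμpos.le
  have hϱint : IntervalIntegrable ϱ volume 0 π := by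
    apply ContinuousOn.intervalIntegrable
    rwa [uIcc_of_le hπ.le]
  set R : ℝ := ∫ ξ in (0:ℝ)..π, ϱ ξ with hRdef
  have hR : 0 ≤ R := by
    apply intervalIntegral.integral_nonneg hπ.le
    exact fun u hu => (hϱpos u hu).le
  -- pointwise lower estimate ⇒ integral estimate
  have hmono : (∫ x in (0:ℝ)..π, (μ - ϱ x) / ν₂) ≤
      ∫ x in (0:ℝ)..π, ν₂ * ((deriv φ x) ^ 2 + (μ - ϱ x) * (φ x) ^ 2) /
        ((deriv φ x) ^ 2 + ν₂ ^ 2 * (φ x) ^ 2) := by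
    apply integral_mono_on hπ.le
      (ContinuousOn.intervalIntegrable (by
        rw [uIcc_of_le hπ.le]
        exact (continuousOn_const.sub hϱ).div_const ν₂))
      (hGint ν₂ hν₂ 0 ⟨le_rfl, hπ.le⟩ π ⟨hπ.le, le_rfl⟩)
    intro x hx
    rw [div_le_div_iff₀ hν₂ (hden ν₂ hν₂ x hx)]
    nlinarith [mul_nonneg (hϱpos x hx).le (sq_nonneg (deriv φ x)), hν₂sq,
      sq_nonneg (φ x), sq_nonneg (deriv φ x)]
  have hIval : (∫ x in (0:ℝ)..π, (μ - ϱ x) / ν₂) = (μ * π - R) / ν₂ := by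
    rw [intervalIntegral.integral_div]
    congr 1
    rw [intervalIntegral.integral_sub intervalIntegrable_const hϱint,
      intervalIntegral.integral_const, smul_eq_mul]
    ring
  rw [hIval, hid ν₂ hν₂] at hmono
  have H2 : μ * π - R ≤ (n:ℝ) * π * ν₂ := by
    rw [div_le_iff₀ hν₂] at hmono
    linarith
  have hkey : (μ - (n:ℝ)^2) * π ≤ 2 * R := by
    nlinarith [mul_nonneg hπ.le (sq_nonneg (ν₂ - (n:ℝ))), hν₂sq]
  rw [hϱ₁]
  calc μ = (n:ℝ)^2 + (μ - (n:ℝ)^2) := by ring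
    _ ≤ (n:ℝ)^2 + 2 / π * R := by
        have h3 : μ - (n:ℝ)^2 ≤ 2 * R / π := (le_div_iff₀ hπ).mpr hkey
        have h4 : 2 / π * R = 2 * R / π := by ring
        rw [h4]; linarith
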